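/- Let {a_i}_{i=1}^d and {b_j}_{j=1}^d be mutually unbiased orthonormal bases of ℂ^d, and let A = {|a_i⟩⟨a_i|}_{i=1}^d and B = {|b_j⟩⟨b_j|}_{j=1}^d be the corresponding non-degenerate projective observables. Then Q_F(A→B) = 1 − 1/d, the supremum being attained at ρ = |b_1⟩⟨b_1|. -/

import Mathlib

open scoped BigOperators ComplexOrder
open Matrix

noncomputable section

/-- A projective observable: a finite family of mutually orthogonal
self-adjoint idempotents summing to the identity. -/
def IsProjObs {d r : ℕ} (P : Fin r → Matrix (Fin d) (Fin d) ℂ) : Prop :=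
  (∀ i, (P i).IsHermitian) ∧ (∀ i, P i * P i = P i) ∧
    (∀ i k, i ≠ k → P i * P k = 0) ∧ (∑ i, P i = 1)

/-- A density matrix: positive semidefinite with unit trace. -/
def IsDensity {d : ℕ} (ρ : Matrix (Fin d) (Fin d) ℂ) : Prop :=
  ρ.PosSemidef ∧ ρ.trace = 1

/-- The measurement channel `E^A(ρ) = Σ_i P_i ρ P_i` of a projective observable. -/
def measChannel {d r : ℕ} (P : Fin r → Matrix (Fin d) (Fin d) ℂ)
    (ρ : Matrix (Fin d) (Fin d) ℂ) : Matrix (Fin d) (Fin d) ℂ :=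
  ∑ i, P i * ρ * P i

/-- `p^B_ρ(j) = tr(P^B_j ρ)`. -/
def probB {d rB : ℕ} (Q : Fin rB → Matrix (Fin d) (Fin d) ℂ)
    (ρ : Matrix (Fin d) (Fin d) ℂ) (j : Fin rB) : ℝ :=
  ((Q j * ρ).trace).re

/-- `q^{A→B}_ρ(j) = tr(P^B_j Σ_i P^A_i ρ P^A_i)`. -/
def probAB {d rA rB : ℕ} (P : Fin rA → Matrix (Fin d) (Fin d) ℂ)
    (Q : Fin rB → Matrix (Fin d) (Fin d) ℂ)
    (ρ : Matrix (Fin d) (Fin d) ℂ) (j : Fin rB) : ℝ :=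
  ((Q j * measChannel P ρ).trace).re

open Classical in
/-- The positive semidefinite square root of a PSD matrix (junk value `0` otherwise). -/
noncomputable def msqrt {d : ℕ} (A : Matrix (Fin d) (Fin d) ℂ) :
    Matrix (Fin d) (Fin d) ℂ :=
  if h : A.PosSemidef then
    (h.1.eigenvectorUnitary : Matrix (Fin d) (Fin d) ℂ) *
      diagonal (((↑) : ℝ → ℂ) ∘ Real.sqrt ∘ h.1.eigenvalues) *
      (star h.1.eigenvectorUnitary : Matrix (Fin d) (Fin d) ℂ)
  else 0

/-- `|X| = √(Xᴴ X)`, the positive semidefinite absolute value of a matrix. -/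
noncomputable def matAbs {d : ℕ} (X : Matrix (Fin d) (Fin d) ℂ) :
    Matrix (Fin d) (Fin d) ℂ :=
  msqrt (Xᴴ * X)

/-- The quantum fidelity `F(ρ,σ) = tr √(√ρ σ √ρ)`. -/
noncomputable def qFid {d : ℕ} (ρ σ : Matrix (Fin d) (Fin d) ℂ) : ℝ :=
  ((msqrt (msqrt ρ * σ * msqrt ρ)).trace).re

/-- Variational distance `D_1(p,q) = (1/2) Σ_j |p_j − q_j|`. -/
def distL1 {rB : ℕ} (p q : Fin rB → ℝ) : ℝ := (1 / 2) * ∑ j, |p j - q j|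

/-- Chebyshev distance `D_∞(p,q) = max_j |p_j − q_j|`. -/
noncomputable def distLinf {rB : ℕ} (p q : Fin rB → ℝ) : ℝ := ⨆ j, |p j - q j|

/-- Classical fidelity `F(p,q) = Σ_j √(p_j q_j)`. -/
noncomputable def classFid {rB : ℕ} (p q : Fin rB → ℝ) : ℝ :=
  ∑ j, Real.sqrt (p j * q j)

/-- `Q_1(A→B)`. -/
noncomputable def Q1 {d rA rB : ℕ} (P : Fin rA → Matrix (Fin d) (Fin d) ℂ)
    (Q : Fin rB → Matrix (Fin d) (Fin d) ℂ) : ℝ :=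
  sSup {x : ℝ | ∃ ρ, IsDensity ρ ∧ x = distL1 (probAB P Q ρ) (probB Q ρ)}

/-- `Q_∞(A→B)`. -/
noncomputable def Qinf {d rA rB : ℕ} (P : Fin rA → Matrix (Fin d) (Fin d) ℂ)
    (Q : Fin rB → Matrix (Fin d) (Fin d) ℂ) : ℝ :=
  sSup {x : ℝ | ∃ ρ, IsDensity ρ ∧ x = distLinf (probAB P Q ρ) (probB Q ρ)}

/-- `Q_F(A→B)`. -/
noncomputable def QF {d rA rB : ℕ} (P : Fin rA → Matrix (Fin d) (Fin d) ℂ)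
    (Q : Fin rB → Matrix (Fin d) (Fin d) ℂ) : ℝ :=
  sSup {x : ℝ | ∃ ρ, IsDensity ρ ∧
    x = 1 - (classFid (probAB P Q ρ) (probB Q ρ)) ^ 2}

/-- The rank-one projection `|v⟩⟨v|` onto a (unit) vector `v`. -/
def proj {d : ℕ} (v : Fin d → ℂ) : Matrix (Fin d) (Fin d) ℂ :=
  Matrix.vecMulVec v (star v)

section AuxMUB

variable {d : ℕ}

lemma aux_vmv_mulVec (v u w : Fin d → ℂ) :
    vecMulVec v u *ᵥ w = (u ⬝ᵥ w) • v := by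
  ext k
  simp [Matrix.mulVec, Matrix.vecMulVec_apply, dotProduct, Finset.mul_sum, mul_comm,
    mul_left_comm]

lemma aux_trace_vmv_mul (v : Fin d → ℂ) (M : Matrix (Fin d) (Fin d) ℂ) :
    (vecMulVec v (star v) * M).trace = star v ⬝ᵥ (M *ᵥ v) := by
  simp only [Matrix.trace, Matrix.diag, Matrix.mul_apply, Matrix.vecMulVec_apply,
    dotProduct, Matrix.mulVec, Pi.star_apply, Finset.mul_sum]
  rw [Finset.sum_comm]
  exact Finset.sum_congr rfl fun m _ => Finset.sum_congr rfl fun k _ => by ring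

lemma aux_sandwich (v : Fin d → ℂ) (M : Matrix (Fin d) (Fin d) ℂ) :
    vecMulVec v (star v) * M * vecMulVec v (star v)
      = (star v ⬝ᵥ (M *ᵥ v)) • vecMulVec v (star v) := by
  ext k l
  simp only [Matrix.mul_apply, Matrix.vecMulVec_apply, Matrix.smul_apply,
    dotProduct, Matrix.mulVec, Pi.star_apply, Finset.sum_mul, Finset.mul_sum,
    smul_eq_mul]
  rw [Finset.sum_comm]
  exact Finset.sum_congr rfl fun m _ => Finset.sum_congr rfl fun n _ => by ring

lemma aux_complete (a : Fin d → (Fin d → ℂ))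
    (ha : ∀ i j, star (a i) ⬝ᵥ a j = if i = j then 1 else 0) (k l : Fin d) :
    ∑ i, a i k * star (a i l) = if k = l then 1 else 0 := by
  classical
  set U : Matrix (Fin d) (Fin d) ℂ := Matrix.of fun k i => a i k with hU
  have h1 : Uᴴ * U = 1 := by
    ext i j
    simpa [hU, Matrix.mul_apply, Matrix.conjTranspose_apply, Matrix.one_apply,
      dotProduct, mul_comm] using ha i j
  have h2 : U * Uᴴ = 1 := mul_eq_one_comm.mp h1
  have := congrArg (fun M => M k l) h2
  simpa [hU, Matrix.mul_apply, Matrix.conjTranspose_apply, Matrix.one_apply] using this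

lemma aux_trace_complete (a : Fin d → (Fin d → ℂ))
    (hc : ∀ k l, ∑ i, a i k * star (a i l) = if k = l then 1 else 0)
    (ρ : Matrix (Fin d) (Fin d) ℂ) :
    ∑ i, star (a i) ⬝ᵥ (ρ *ᵥ a i) = ρ.trace := by
  classical
  have : ∑ i, star (a i) ⬝ᵥ (ρ *ᵥ a i)
      = ∑ m, ∑ n, ρ m n * ∑ i, a i n * star (a i m) := by
    simp only [dotProduct, Matrix.mulVec, Pi.star_apply, Finset.mul_sum]
    rw [Finset.sum_comm]
    refine Finset.sum_congr rfl fun m _ => ?_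
    rw [Finset.sum_comm]
    refine Finset.sum_congr rfl fun n _ => ?_
    exact Finset.sum_congr rfl fun i _ => by ring
  rw [this]
  simp only [hc]
  simp [Matrix.trace, Matrix.diag, Finset.sum_ite_eq, eq_comm]

lemma aux_trace_projprod (v w : Fin d → ℂ) :
    (vecMulVec v (star v) * vecMulVec w (star w)).trace
      = (star w ⬝ᵥ v) * (star v ⬝ᵥ w) := by
  rw [aux_trace_vmv_mul, aux_vmv_mulVec, dotProduct_smul, smul_eq_mul]

lemma aux_proj_psd (v : Fin d → ℂ) : (vecMulVec v (star v)).PosSemidef := by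
  rw [Matrix.posSemidef_iff_dotProduct_mulVec]
  constructor
  · ext k l
    simp [Matrix.conjTranspose_apply, Matrix.vecMulVec_apply, mul_comm]
  · intro x
    rw [aux_vmv_mulVec, dotProduct_smul]
    have h1 : star x ⬝ᵥ v = star (star v ⬝ᵥ x) := Matrix.star_dotProduct x v
    rw [smul_eq_mul, h1, Complex.star_def, Complex.mul_conj]
    rw [Complex.le_def]
    simp [Complex.normSq_nonneg]

lemma aux_proj_trace (v : Fin d → ℂ) :
    (vecMulVec v (star v)).trace = star v ⬝ᵥ v := by
  simp [Matrix.trace, Matrix.diag, Matrix.vecMulVec_apply, dotProduct, mul_comm]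

lemma aux_probAB_const {d : ℕ}
    (a b : Fin d → (Fin d → ℂ))
    (hmub : ∀ i j, Complex.normSq (star (a i) ⬝ᵥ b j) = 1 / (d : ℝ))
    (hc : ∀ k l, ∑ i, a i k * star (a i l) = if k = l then 1 else 0)
    (ρ : Matrix (Fin d) (Fin d) ℂ) (htr : ρ.trace = 1) (j : Fin d) :
    probAB (fun i => vecMulVec (a i) (star (a i)))
      (fun j => vecMulVec (b j) (star (b j))) ρ j = 1 / (d : ℝ) := by
  simp only [probAB, measChannel]
  have hmc : ∑ i, vecMulVec (a i) (star (a i)) * ρ * vecMulVec (a i) (star (a i))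
      = ∑ i, (star (a i) ⬝ᵥ (ρ *ᵥ a i)) • vecMulVec (a i) (star (a i)) :=
    Finset.sum_congr rfl fun i _ => aux_sandwich (a i) ρ
  have hpp : ∀ i, (vecMulVec (b j) (star (b j)) * vecMulVec (a i) (star (a i))).trace
      = ((1 / (d : ℝ) : ℝ) : ℂ) := by
    intro i
    rw [aux_trace_projprod]
    have h1 : star (b j) ⬝ᵥ a i = star (star (a i) ⬝ᵥ b j) :=
      Matrix.star_dotProduct (b j) (a i)
    rw [h1, Complex.star_def, Complex.mul_conj, hmub i j]
  have hkey : (vecMulVec (b j) (star (b j)) *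
        ∑ i, vecMulVec (a i) (star (a i)) * ρ * vecMulVec (a i) (star (a i))).trace
      = ρ.trace * ((1 / (d : ℝ) : ℝ) : ℂ) := by
    rw [hmc, Finset.mul_sum, Matrix.trace_sum]
    have h2 : ∀ i, (vecMulVec (b j) (star (b j)) *
          ((star (a i) ⬝ᵥ (ρ *ᵥ a i)) • vecMulVec (a i) (star (a i)))).trace
        = (star (a i) ⬝ᵥ (ρ *ᵥ a i)) * ((1 / (d : ℝ) : ℝ) : ℂ) := by
      intro i
      rw [Matrix.mul_smul, Matrix.trace_smul, smul_eq_mul, hpp i]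
    simp only [h2]
    rw [← Finset.sum_mul, aux_trace_complete a hc ρ]
  rw [hkey, htr, one_mul, Complex.ofReal_re]

end AuxMUB

theorem stmt_10 {d : ℕ} (hd : 0 < d)
    (a b : Fin d → (Fin d → ℂ))
    (ha : ∀ i j, star (a i) ⬝ᵥ a j = if i = j then 1 else 0)
    (hb : ∀ i j, star (b i) ⬝ᵥ b j = if i = j then 1 else 0)
    (hmub : ∀ i j, Complex.normSq (star (a i) ⬝ᵥ b j) = 1 / (d : ℝ)) :
    QF (fun i => proj (a i)) (fun j => proj (b j)) = 1 - 1 / (d : ℝ) ∧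
      1 - (classFid
            (probAB (fun i => proj (a i)) (fun j => proj (b j)) (proj (b ⟨0, hd⟩)))
            (probB (fun j => proj (b j)) (proj (b ⟨0, hd⟩)))) ^ 2
        = 1 - 1 / (d : ℝ) := by
  classical
  have hdR : (0:ℝ) < (d:ℝ) := by exact_mod_cast hd
  set j0 : Fin d := ⟨0, hd⟩ with hj0
  have hca := aux_complete a ha
  have hcb := aux_complete b hb
  have hq0 : ∀ (ρ : Matrix (Fin d) (Fin d) ℂ), ρ.trace = 1 → ∀ j,
      probAB (fun i => proj (a i)) (fun j => proj (b j)) ρ j = 1 / (d:ℝ) := by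
    intro ρ htr j
    simpa [proj] using aux_probAB_const a b hmub hca ρ htr j
  have hpB : ∀ (ρ : Matrix (Fin d) (Fin d) ℂ) (j : Fin d),
      probB (fun j => proj (b j)) ρ j = (star (b j) ⬝ᵥ (ρ *ᵥ b j)).re := by
    intro ρ j
    simp only [probB, proj]
    rw [aux_trace_vmv_mul]
  -- the witness density
  have hρ0tr : (proj (b j0)).trace = 1 := by
    rw [proj, aux_proj_trace]
    simpa using hb j0 j0
  have hρ0 : IsDensity (proj (b j0)) := ⟨by rw [proj]; exact aux_proj_psd (b j0), hρ0tr⟩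
  have hp0 : ∀ j, probB (fun j => proj (b j)) (proj (b j0)) j
      = if j = j0 then 1 else 0 := by
    intro j
    simp only [probB, proj]
    rw [aux_trace_projprod, hb j0 j, hb j j0]
    by_cases h : j = j0 <;> simp [h]
  -- value at the witness
  have hwit : 1 - (classFid
        (probAB (fun i => proj (a i)) (fun j => proj (b j)) (proj (b j0)))
        (probB (fun j => proj (b j)) (proj (b j0)))) ^ 2 = 1 - 1 / (d:ℝ) := by
    have hcf : classFid
        (probAB (fun i => proj (a i)) (fun j => proj (b j)) (proj (b j0)))
        (probB (fun j => proj (b j)) (proj (b j0))) = Real.sqrt (1 / (d:ℝ)) := by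
      unfold classFid
      have hterm : ∀ j : Fin d,
          Real.sqrt ((probAB (fun i => proj (a i)) (fun j => proj (b j)) (proj (b j0)) j)
            * (probB (fun j => proj (b j)) (proj (b j0)) j))
          = if j = j0 then Real.sqrt (1 / (d:ℝ)) else 0 := by
        intro j
        rw [hq0 _ hρ0tr j, hp0 j]
        by_cases h : j = j0 <;> simp [h]
      rw [Finset.sum_congr rfl fun j _ => hterm j]
      simp
    rw [hcf, Real.sq_sqrt (by positivity)]
  -- upper bound over all densities
  have hub : ∀ x ∈ {x : ℝ | ∃ ρ, IsDensity ρ ∧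
      x = 1 - (classFid (probAB (fun i => proj (a i)) (fun j => proj (b j)) ρ)
        (probB (fun j => proj (b j)) ρ)) ^ 2}, x ≤ 1 - 1 / (d:ℝ) := by
    rintro x ⟨ρ, hρ, rfl⟩
    have hpnn : ∀ j, 0 ≤ probB (fun j => proj (b j)) ρ j := by
      intro j
      rw [hpB ρ j]
      exact (Complex.le_def.mp (hρ.1.dotProduct_mulVec_nonneg (b j))).1
    have hpsum : ∑ j, probB (fun j => proj (b j)) ρ j = 1 := by
      have : ∑ j, probB (fun j => proj (b j)) ρ j
          = (∑ j, star (b j) ⬝ᵥ (ρ *ᵥ b j)).re := by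
        rw [Complex.re_sum]
        exact Finset.sum_congr rfl fun j _ => hpB ρ j
      rw [this, aux_trace_complete b hcb ρ, hρ.2, Complex.one_re]
    have hF : classFid (probAB (fun i => proj (a i)) (fun j => proj (b j)) ρ)
        (probB (fun j => proj (b j)) ρ)
        = Real.sqrt (1 / (d:ℝ)) * ∑ j, Real.sqrt (probB (fun j => proj (b j)) ρ j) := by
      unfold classFid
      rw [Finset.mul_sum]
      refine Finset.sum_congr rfl fun j _ => ?_
      rw [hq0 ρ hρ.2 j, Real.sqrt_mul (by positivity)]
    have hs1 : (1:ℝ) ≤ ∑ j, Real.sqrt (probB (fun j => proj (b j)) ρ j) := by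
      calc (1:ℝ) = ∑ j, probB (fun j => proj (b j)) ρ j := hpsum.symm
        _ ≤ ∑ j, Real.sqrt (probB (fun j => proj (b j)) ρ j) := by
          refine Finset.sum_le_sum fun j _ => ?_
          have hle1 : probB (fun j => proj (b j)) ρ j ≤ 1 := by
            rw [← hpsum]
            exact Finset.single_le_sum (fun k _ => hpnn k) (Finset.mem_univ j)
          nlinarith [Real.sq_sqrt (hpnn j), Real.sqrt_nonneg (probB (fun j => proj (b j)) ρ j)]
    have hsq : 1 / (d:ℝ) ≤ (classFid (probAB (fun i => proj (a i)) (fun j => proj (b j)) ρ)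
        (probB (fun j => proj (b j)) ρ)) ^ 2 := by
      rw [hF, mul_pow, Real.sq_sqrt (by positivity)]
      have hs2 : (1:ℝ) ≤ (∑ j, Real.sqrt (probB (fun j => proj (b j)) ρ j)) ^ 2 := by
        nlinarith [hs1]
      calc 1 / (d:ℝ) = 1 / (d:ℝ) * 1 := by ring
        _ ≤ 1 / (d:ℝ) * (∑ j, Real.sqrt (probB (fun j => proj (b j)) ρ j)) ^ 2 :=
          mul_le_mul_of_nonneg_left hs2 (by positivity)
    linarith
  refine ⟨?_, hwit⟩
  have hmem : (1 - 1 / (d:ℝ)) ∈ {x : ℝ | ∃ ρ, IsDensity ρ ∧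
      x = 1 - (classFid (probAB (fun i => proj (a i)) (fun j => proj (b j)) ρ)
        (probB (fun j => proj (b j)) ρ)) ^ 2} :=
    ⟨proj (b j0), hρ0, hwit.symm⟩
  exact le_antisymm (csSup_le ⟨_, hmem⟩ hub) (le_csSup ⟨_, hub⟩ hmem)


end
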